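/- arXiv:2408.01395 — 2 statements merged into one kernel-verified Lean document; each statement's English description precedes it below -/
import Mathlib

section
/- Let F(t) ∈ ℤ[[t]] have constant term 1 (integer coefficients), and let (a(k))_{k≥1} be the unique rationals with ∏_{k≥1} (1+t^k)^{a(k)} = F(t). Then a(k) is an integer for every k ≥ 1. -/
open Polynomial in
lemma ringChoose_intCast (m : ℤ) (n : ℕ) :
    Ring.choose (m : ℚ) n = ((Ring.choose m n : ℤ) : ℚ) := by
  have h1 := Ring.descPochhammer_eq_factorial_smul_choose (R := ℚ) (m : ℚ) n
  have h2 := Ring.descPochhammer_eq_factorial_smul_choose (R := ℤ) m n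
  have hcast : ((descPochhammer ℤ n).smeval (m : ℚ)) =
      (((descPochhammer ℤ n).smeval m : ℤ) : ℚ) := by
    rw [← aeval_eq_smeval, aeval_def,
      show ((m : ℚ)) = algebraMap ℤ ℚ m by simp,
      eval₂_at_apply, eval_eq_smeval]
    simp
  rw [hcast, h2] at h1
  have : ((n.factorial : ℚ)) * Ring.choose (m : ℚ) n
      = (n.factorial : ℚ) * ((Ring.choose m n : ℤ) : ℚ) := by
    rw [← nsmul_eq_mul, ← nsmul_eq_mul, ← h1]
    simp [nsmul_eq_mul]
  exact mul_left_cancel₀ (by exact_mod_cast n.factorial_ne_zero) this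

/-- The binomial series `(1 + t^k)^a = ∑_{i≥0} C(a,i) t^(k·i)` in `ℚ[[t]]`,
for a rational exponent `a`, where `C(a,i) = a(a-1)⋯(a-i+1)/i!` is the
generalized binomial coefficient (`Ring.choose`). -/
noncomputable def binomPow (a : ℚ) (k : ℕ) : PowerSeries ℚ :=
  PowerSeries.mk fun n => if k ∣ n then Ring.choose a (n / k) else 0

lemma binomPow_coeff_zero (a : ℚ) (k : ℕ) : PowerSeries.coeff 0 (binomPow a k) = 1 := by
  simp [binomPow]

lemma binomPow_coeff_self (a : ℚ) {k : ℕ} (hk : 1 ≤ k) :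
    PowerSeries.coeff k (binomPow a k) = a := by
  simp [binomPow, Nat.div_self hk]

lemma binomPow_coeff_mid (a : ℚ) {k n : ℕ} (h0 : 0 < n) (hn : n < k) :
    PowerSeries.coeff n (binomPow a k) = 0 := by
  have hd : ¬ k ∣ n := fun h => absurd (Nat.le_of_dvd h0 h) (not_le.mpr hn)
  simp [binomPow, hd]

/-- all coefficients are integers -/
def IntC (φ : PowerSeries ℚ) : Prop := ∀ n : ℕ, ∃ z : ℤ, PowerSeries.coeff n φ = z

lemma IntC.one : IntC 1 := by
  intro n
  refine ⟨if n = 0 then 1 else 0, ?_⟩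
  rw [PowerSeries.coeff_one]
  split <;> simp

lemma IntC.mul {φ ψ : PowerSeries ℚ} (hφ : IntC φ) (hψ : IntC ψ) : IntC (φ * ψ) := by
  intro n
  choose f hf using hφ
  choose g hg using hψ
  refine ⟨∑ p ∈ Finset.HasAntidiagonal.antidiagonal n, f p.1 * g p.2, ?_⟩
  rw [PowerSeries.coeff_mul]
  push_cast
  exact Finset.sum_congr rfl fun p _ => by rw [hf, hg]

lemma binomPow_int (m : ℤ) (k : ℕ) : IntC (binomPow (m : ℚ) k) := by
  intro n
  by_cases h : k ∣ n
  · exact ⟨Ring.choose m (n / k), by simp [binomPow, h, ringChoose_intCast]⟩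
  · exact ⟨0, by simp [binomPow, h]⟩

/-- `a : ℕ → ℚ` is the sequence of exponents of `F ∈ ℚ[[t]]` in the
factorization `F = ∏_{k≥1} (1 + t^k)^(a k)`. The t-adically convergent
infinite product is expressed coefficientwise: the factor for `k` is
`1 + O(t^k)`, so the coefficient of `t^n` of the product is that of the
finite partial product over `1 ≤ k ≤ n`. -/
def IsExpSeq (F : PowerSeries ℚ) (a : ℕ → ℚ) : Prop :=
  ∀ n : ℕ,
    PowerSeries.coeff n (∏ k ∈ Finset.Icc 1 n, binomPow (a k) k) =
      PowerSeries.coeff n F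

/-- if `F ∈ ℤ[[t]]` has constant term 1 and the rationals
`(a k)_{k≥1}` satisfy `∏_{k≥1}(1+t^k)^(a k) = F` (viewing `F` in ℚ[[t]]),
then each `a k` (for `k ≥ 1`) is an integer. -/
theorem stmt6 (F : PowerSeries ℤ) (hF : PowerSeries.constantCoeff F = 1)
    (a : ℕ → ℚ) (ha : IsExpSeq (PowerSeries.map (Int.castRingHom ℚ) F) a) :
    ∀ k : ℕ, 1 ≤ k → ∃ m : ℤ, a k = m := by
  intro k
  induction k using Nat.strong_induction_on with
  | _ k ih =>
  intro hk
  obtain ⟨m, rfl⟩ := Nat.exists_eq_succ_of_ne_zero (Nat.one_le_iff_ne_zero.mp hk)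
  have h := ha (m + 1)
  rw [Finset.prod_Icc_succ_top (Nat.le_add_left 1 m)] at h
  set P := ∏ j ∈ Finset.Icc 1 m, binomPow (a j) j with hPdef
  set B := binomPow (a (m + 1)) (m + 1) with hBdef
  have hP0 : PowerSeries.coeff 0 P = 1 := by
    rw [hPdef, PowerSeries.coeff_zero_eq_constantCoeff, map_prod]
    refine Finset.prod_eq_one fun j _ => ?_
    rw [← PowerSeries.coeff_zero_eq_constantCoeff]
    exact binomPow_coeff_zero _ _
  have hmul : PowerSeries.coeff (m + 1) (P * B)
      = PowerSeries.coeff (m + 1) P + a (m + 1) := by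
    rw [PowerSeries.coeff_mul, Finset.Nat.sum_antidiagonal_eq_sum_range_succ_mk,
      Finset.sum_range_succ]
    have hsum : ∑ i ∈ Finset.range (m + 1),
        PowerSeries.coeff i P * PowerSeries.coeff (m + 1 - i) B
        = PowerSeries.coeff 0 P * PowerSeries.coeff (m + 1) B := by
      refine Finset.sum_eq_single_of_mem 0 (Finset.mem_range.mpr (Nat.succ_pos m)) ?_
      intro i hi hi0
      have hlt : i < m + 1 := Finset.mem_range.mp hi
      have : PowerSeries.coeff (m + 1 - i) B = 0 :=
        binomPow_coeff_mid _ (by omega) (by omega)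
      rw [this, mul_zero]
    rw [hsum, hP0, Nat.sub_self, binomPow_coeff_self _ (Nat.le_add_left 1 m),
      binomPow_coeff_zero, one_mul, mul_one, add_comm]
  rw [hmul] at h
  have hPint : IntC P := by
    refine Finset.prod_induction _ IntC (fun _ _ => IntC.mul) IntC.one ?_
    intro j hj
    obtain ⟨hj1, hj2⟩ := Finset.mem_Icc.mp hj
    obtain ⟨z, hz⟩ := ih j (by omega) hj1
    rw [hz]
    exact binomPow_int z j
  obtain ⟨z, hz⟩ := hPint (m + 1)
  refine ⟨PowerSeries.coeff (m + 1) F - z, ?_⟩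
  have hFc : PowerSeries.coeff (m + 1) (PowerSeries.map (Int.castRingHom ℚ) F)
      = ((PowerSeries.coeff (m + 1) F : ℤ) : ℚ) := by
    simp [PowerSeries.coeff_map]
  rw [hFc] at h
  rw [hz] at h
  push_cast
  linarith
end

section
/- In ℚ[[t]], the expansion of 1 + t + t^2 as ∏_{k≥1}(1+t^k)^{a(k)} has a(k) = 1 if k = 2^j for some j ≥ 0, a(k) = −1 if k = 3·2^j for some j ≥ 0, and a(k) = 0 otherwise. -/
open Classical

open PowerSeries

lemma choose_neg_one (i : ℕ) : Ring.choose (-1 : ℚ) i = (-1) ^ i := by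
  induction i with
  | zero => simp [Ring.choose_zero_right]
  | succ i ih =>
    have h := Ring.choose_succ_succ (-1 : ℚ) i
    simp only [neg_add_cancel] at h
    rw [Ring.choose_zero_succ] at h
    have : Ring.choose (-1 : ℚ) (i+1) = - Ring.choose (-1:ℚ) i := by linarith
    rw [this, ih, pow_succ]; ring

lemma choose_one (i : ℕ) (hi : 2 ≤ i) : Ring.choose (1 : ℚ) i = 0 := by
  have := Ring.choose_natCast (R := ℚ) 1 i
  norm_num at this
  rw [this, Nat.choose_eq_zero_of_lt hi]
  simp

lemma binomPow_zero (k : ℕ) (hk : 1 ≤ k) : binomPow 0 k = 1 := by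
  ext n
  simp only [binomPow, coeff_mk, coeff_one]
  by_cases hn : n = 0
  · subst hn; simp [Ring.choose_zero_right]
  · rw [if_neg hn]
    by_cases h : k ∣ n
    · rw [if_pos h]
      exact Ring.choose_zero_pos ℚ (Nat.div_pos (Nat.le_of_dvd (by omega) h) (by omega))
    · rw [if_neg h]

lemma binomPow_one (k : ℕ) (hk : 1 ≤ k) : binomPow 1 k = 1 + X ^ k := by
  ext n
  simp only [binomPow, coeff_mk, map_add, coeff_one, coeff_X_pow]
  by_cases hn : n = 0
  · subst hn; rw [if_pos (dvd_zero k), if_pos rfl, if_neg (by omega)]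
    simp [Ring.choose_zero_right]
  · rw [if_neg hn]
    by_cases h : k ∣ n
    · rw [if_pos h]
      rcases eq_or_ne n k with rfl | hne
      · rw [Nat.div_self (by omega), Ring.choose_one_right, if_pos rfl]; ring
      · rw [if_neg hne]
        have h2 : 2 ≤ n / k := by
          rcases h with ⟨c, rfl⟩
          rw [Nat.mul_div_cancel_left _ (by omega)]
          rcases c with _ | _ | c <;> simp_all
        simpa using choose_one _ h2
    · rw [if_neg h, if_neg (by rintro rfl; exact h dvd_rfl)]
      simp

lemma binomPow_neg_one (k : ℕ) (hk : 1 ≤ k) :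
    binomPow (-1) k * (1 + X ^ k) = 1 := by
  ext n
  rw [mul_add, mul_one, map_add, coeff_mul_X_pow', coeff_one]
  simp only [binomPow, coeff_mk, choose_neg_one]
  by_cases hn : n = 0
  · subst hn
    rw [if_pos (dvd_zero k), if_neg (by omega : ¬ k ≤ 0), if_pos rfl]
    simp
  · rw [if_neg hn]
    by_cases h : k ∣ n
    · rw [if_pos h, if_pos (Nat.le_of_dvd (by omega) h), if_pos ((Nat.dvd_sub h dvd_rfl))]
      have hdiv : (n - k) / k = n / k - 1 := by
        rcases h with ⟨c, rfl⟩
        rcases c with _ | c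
        · omega
        · rw [Nat.mul_div_cancel_left _ (by omega)]
          have : k * (c+1) - k = k * c := by ring_nf; omega
          rw [this, Nat.mul_div_cancel_left _ (by omega)]
          rcases c with _ | _ | c <;> simp_all
      rw [hdiv]
      have h1 : 1 ≤ n / k := Nat.one_le_div_iff (by omega) |>.mpr (Nat.le_of_dvd (by omega) h)
      obtain ⟨m, hm⟩ : ∃ m, n / k = m + 1 := ⟨n / k - 1, by omega⟩
      rw [hm, Nat.add_sub_cancel, pow_succ]
      ring
    · rw [if_neg h]
      by_cases hkn : k ≤ n
      · rw [if_pos hkn, if_neg (fun hd => h (by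
          have hnk : n = (n - k) + k := by omega
          rw [hnk]; exact Nat.dvd_add hd dvd_rfl))]
        simp
      · rw [if_neg hkn]
        simp

open Finset in
lemma geom_prod (c : ℕ) (m : ℕ) :
    ∏ j ∈ range m, (1 + (X : PowerSeries ℚ) ^ (c * 2 ^ j)) =
      ∑ i ∈ range (2 ^ m), (X : PowerSeries ℚ) ^ (c * i) := by
  induction m with
  | zero => simp
  | succ m ih =>
    rw [prod_range_succ, ih, pow_succ 2 m, mul_two, sum_range_add]
    rw [mul_add, mul_one]
    congr 1
    rw [Finset.sum_mul]
    apply Finset.sum_congr rfl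
    intro i _
    rw [← pow_add]
    congr 1
    ring

open Finset in
lemma F_mul_geom (M : ℕ) :
    (1 + X + X ^ 2 : PowerSeries ℚ) * ∑ i ∈ range M, (X : PowerSeries ℚ) ^ (3 * i) =
      ∑ i ∈ range (3 * M), (X : PowerSeries ℚ) ^ i := by
  induction M with
  | zero => simp
  | succ M ih =>
    rw [sum_range_succ, mul_add, ih]
    have h3 : 3 * (M + 1) = 3 * M + 1 + 1 + 1 := by ring
    rw [h3, sum_range_succ, sum_range_succ, sum_range_succ]
    have e1 : (1 + X + X ^ 2 : PowerSeries ℚ) * X ^ (3 * M) =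
        X ^ (3 * M) + X ^ (3 * M + 1) + X ^ (3 * M + 1 + 1) := by
      ring
    rw [e1]
    ring

open Finset in
lemma coeff_geom_sum (N m : ℕ) (h : m < N) :
    PowerSeries.coeff m (∑ i ∈ range N, (X : PowerSeries ℚ) ^ i) = 1 := by
  rw [map_sum]
  simp only [coeff_X_pow]
  rw [Finset.sum_ite_eq (range N) m (fun _ => (1:ℚ))]
  rw [if_pos (mem_range.mpr h)]

lemma coeff_mul_congr (F G K : PowerSeries ℚ) (n : ℕ)
    (h : ∀ m ≤ n, PowerSeries.coeff m F = PowerSeries.coeff m G) :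
    ∀ m ≤ n, PowerSeries.coeff m (F * K) = PowerSeries.coeff m (G * K) := by
  intro m hm
  rw [coeff_mul, coeff_mul]
  apply Finset.sum_congr rfl
  intro p hp
  rw [Finset.HasAntidiagonal.mem_antidiagonal] at hp
  rw [h p.1 (by omega)]

lemma p2_not_p1 {k : ℕ} (h : ∃ j : ℕ, k = 3 * 2 ^ j) : ¬ ∃ j : ℕ, k = 2 ^ j := by
  rintro ⟨i, rfl⟩
  obtain ⟨j, hj⟩ := h
  have h3 : (3:ℕ) ∣ 2 ^ i := ⟨2 ^ j, hj⟩
  have := Nat.Prime.dvd_of_dvd_pow Nat.prime_three h3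
  norm_num at this

open Classical

open Finset in
lemma S1_eq (n : ℕ) (hn : 1 ≤ n) :
    (Icc 1 n).filter (fun k => ∃ j : ℕ, k = 2 ^ j) =
      (range (Nat.log 2 n + 1)).image (fun j => 2 ^ j) := by
  ext k
  simp only [mem_filter, mem_Icc, mem_image, mem_range]
  constructor
  · rintro ⟨⟨h1, h2⟩, j, rfl⟩
    exact ⟨j, by
      have := (Nat.le_log_iff_pow_le (by norm_num) (by omega)).mpr h2
      omega, rfl⟩
  · rintro ⟨j, hj, rfl⟩
    refine ⟨⟨Nat.one_le_two_pow, ?_⟩, j, rfl⟩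
    calc 2 ^ j ≤ 2 ^ Nat.log 2 n := Nat.pow_le_pow_right (by norm_num) (by omega)
    _ ≤ n := Nat.pow_log_le_self 2 (by omega)

noncomputable def m2 (n : ℕ) : ℕ := if 3 ≤ n then Nat.log 2 (n / 3) + 1 else 0

open Finset in
lemma S2_eq (n : ℕ) :
    (Icc 1 n).filter (fun k => ∃ j : ℕ, k = 3 * 2 ^ j) =
      (range (m2 n)).image (fun j => 3 * 2 ^ j) := by
  ext k
  simp only [mem_filter, mem_Icc, mem_image, mem_range]
  constructor
  · rintro ⟨⟨h1, h2⟩, j, rfl⟩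
    have h3 : 3 ≤ n := le_trans (by have := Nat.one_le_two_pow (n := j); omega) h2
    have hd : 2 ^ j ≤ n / 3 := by
      rw [Nat.le_div_iff_mul_le (by norm_num)]
      omega
    have := (Nat.le_log_iff_pow_le (b := 2) (by norm_num) (x := j) (y := n / 3)
      (by omega)).mpr hd
    exact ⟨j, by simp only [m2, if_pos h3]; omega, rfl⟩
  · rintro ⟨j, hj, rfl⟩
    have h3 : 3 ≤ n := by
      by_contra hc
      simp only [m2, if_neg hc] at hj
      omega
    simp only [m2, if_pos h3] at hj
    have : 2 ^ j ≤ n / 3 := by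
      calc 2 ^ j ≤ 2 ^ Nat.log 2 (n / 3) := Nat.pow_le_pow_right (by norm_num) (by omega)
      _ ≤ n / 3 := Nat.pow_log_le_self 2 (by omega)
    refine ⟨⟨by have := Nat.one_le_two_pow (n := j); omega, ?_⟩, j, rfl⟩
    have := Nat.div_mul_le_self n 3
    omega

lemma n_lt_pow1 (n : ℕ) : n < 2 ^ (Nat.log 2 n + 1) := Nat.lt_pow_succ_log_self (by norm_num) n

lemma n_lt_pow2 (n : ℕ) : n < 3 * 2 ^ (m2 n) := by
  by_cases h3 : 3 ≤ n
  · simp only [m2, if_pos h3]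
    have h1 : n / 3 < 2 ^ (Nat.log 2 (n / 3) + 1) := Nat.lt_pow_succ_log_self (by norm_num) _
    omega
  · simp only [m2, if_neg h3]
    omega

noncomputable def bfun : ℕ → ℚ := fun k =>
  if ∃ j : ℕ, k = 2 ^ j then 1 else if ∃ j : ℕ, k = 3 * 2 ^ j then -1 else 0

open Finset in
lemma exists_bfun (n : ℕ) :
    PowerSeries.coeff n (∏ k ∈ Icc 1 n, binomPow (bfun k) k) =
      PowerSeries.coeff n (1 + X + X ^ 2 : PowerSeries ℚ) := by
  rcases Nat.eq_zero_or_pos n with rfl | hn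
  · simp
  set F : PowerSeries ℚ := 1 + X + X ^ 2 with hF
  set A : PowerSeries ℚ := ∑ i ∈ range (2 ^ (Nat.log 2 n + 1)), (X : PowerSeries ℚ) ^ i with hA
  set B : PowerSeries ℚ := ∏ k ∈ (Icc 1 n).filter (fun k => ∃ j : ℕ, k = 3 * 2 ^ j),
    binomPow (-1) k with hB
  set C : PowerSeries ℚ := ∏ k ∈ (Icc 1 n).filter (fun k => ∃ j : ℕ, k = 3 * 2 ^ j),
    (1 + (X : PowerSeries ℚ) ^ k) with hC
  have hsplit : ∏ k ∈ Icc 1 n, binomPow (bfun k) k = A * B := by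
    rw [← Finset.prod_filter_mul_prod_filter_not (Icc 1 n) (fun k => ∃ j : ℕ, k = 2 ^ j)]
    congr 1
    · rw [S1_eq n hn, Finset.prod_image (fun i _ j _ h => Nat.pow_right_injective le_rfl h)]
      have : ∀ j ∈ range (Nat.log 2 n + 1), binomPow (bfun (2 ^ j)) (2 ^ j) =
          1 + (X : PowerSeries ℚ) ^ (2 ^ j) := by
        intro j _
        rw [show bfun (2 ^ j) = 1 from if_pos ⟨j, rfl⟩]
        exact binomPow_one _ Nat.one_le_two_pow
      rw [Finset.prod_congr rfl this, hA]
      have := geom_prod 1 (Nat.log 2 n + 1)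
      simpa using this
    · rw [← Finset.prod_filter_mul_prod_filter_not _ (fun k => ∃ j : ℕ, k = 3 * 2 ^ j), hB]
      have h2 : ∏ k ∈ ((Icc 1 n).filter fun k => ¬∃ j : ℕ, k = 2 ^ j).filter
          (fun k => ¬∃ j : ℕ, k = 3 * 2 ^ j), binomPow (bfun k) k = 1 := by
        apply Finset.prod_eq_one
        intro k hk
        simp only [mem_filter, mem_Icc] at hk
        rw [show bfun k = 0 by rw [bfun, if_neg hk.1.2, if_neg hk.2]]
        exact binomPow_zero k hk.1.1.1
      rw [h2, mul_one]
      rw [Finset.filter_filter]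
      have hset : (Icc 1 n).filter (fun k => (¬∃ j : ℕ, k = 2 ^ j) ∧ ∃ j : ℕ, k = 3 * 2 ^ j) =
          (Icc 1 n).filter (fun k => ∃ j : ℕ, k = 3 * 2 ^ j) := by
        apply Finset.filter_congr
        intro k _
        simp only [iff_iff_implies_and_implies]
        exact ⟨fun h => h.2, fun h => ⟨p2_not_p1 h, h⟩⟩
      rw [hset]
      apply Finset.prod_congr rfl
      intro k hk
      simp only [mem_filter, mem_Icc] at hk
      rw [show bfun k = -1 by rw [bfun, if_neg (p2_not_p1 hk.2), if_pos hk.2]]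
  have hBC : B * C = 1 := by
    rw [hB, hC, ← Finset.prod_mul_distrib]
    apply Finset.prod_eq_one
    intro k hk
    simp only [mem_filter, mem_Icc] at hk
    exact binomPow_neg_one k hk.1.1
  have hCgeom : C = ∑ i ∈ range (2 ^ (m2 n)), (X : PowerSeries ℚ) ^ (3 * i) := by
    rw [hC, S2_eq n, Finset.prod_image (fun i _ j _ h => by
      have : (2:ℕ) ^ i = 2 ^ j := by omega
      exact Nat.pow_right_injective le_rfl this)]
    exact geom_prod 3 (m2 n)
  have hFC : F * C = ∑ i ∈ range (3 * 2 ^ (m2 n)), (X : PowerSeries ℚ) ^ i := by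
    rw [hCgeom, hF, F_mul_geom]
  have key : ∀ m ≤ n, PowerSeries.coeff m ((∏ k ∈ Icc 1 n, binomPow (bfun k) k) * C) =
      PowerSeries.coeff m (F * C) := by
    intro m hm
    rw [hsplit, mul_assoc, hBC, mul_one, hFC, hA]
    rw [coeff_geom_sum _ _ (lt_of_le_of_lt hm (n_lt_pow1 n)),
      coeff_geom_sum _ _ (lt_of_le_of_lt hm (n_lt_pow2 n))]
  have hCB : C * B = 1 := by rw [mul_comm]; exact hBC
  calc PowerSeries.coeff n (∏ k ∈ Icc 1 n, binomPow (bfun k) k)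
      = PowerSeries.coeff n ((∏ k ∈ Icc 1 n, binomPow (bfun k) k) * C * B) := by
        rw [mul_assoc, hCB, mul_one]
    _ = PowerSeries.coeff n (F * C * B) :=
        coeff_mul_congr _ _ B n key n le_rfl
    _ = PowerSeries.coeff n F := by rw [mul_assoc, hCB, mul_one]

open Finset in
lemma coeff_mul_binomPow (P : PowerSeries ℚ) (c : ℚ) (n : ℕ) (hn : 1 ≤ n) :
    PowerSeries.coeff n (P * binomPow c n) =
      PowerSeries.coeff n P + c * PowerSeries.constantCoeff P := by
  rw [coeff_mul, Finset.Nat.sum_antidiagonal_eq_sum_range_succ_mk, Finset.sum_range_succ]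
  have h0 : PowerSeries.coeff (n - n) (binomPow c n) = 1 := by
    simp [binomPow, Ring.choose_zero_right]
  rw [h0, mul_one]
  have hrest : ∑ k ∈ range n, PowerSeries.coeff k P *
      PowerSeries.coeff (n - k) (binomPow c n) =
      PowerSeries.coeff 0 P * PowerSeries.coeff (n - 0) (binomPow c n) := by
    apply Finset.sum_eq_single_of_mem 0 (mem_range.mpr (by omega))
    intro k hk hk0
    rw [mem_range] at hk
    have : ¬ n ∣ (n - k) := by
      intro hd
      have := Nat.le_of_dvd (by omega) hd
      omega
    simp [binomPow, this]
  have hc : PowerSeries.coeff (n - 0) (binomPow c n) = c := by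
    rw [Nat.sub_zero]
    simp [binomPow, Nat.div_self (by omega : 0 < n), Ring.choose_one_right]
  rw [hrest, hc, coeff_zero_eq_constantCoeff_apply]
  ring


/-- the unique exponents with
`∏_{k≥1}(1+t^k)^(a k) = 1 + t + t^2` in ℚ[[t]] are `a k = 1` if
`k = 2^j`, `a k = −1` if `k = 3·2^j`, and `a k = 0` otherwise. -/
theorem stmt8 (a : ℕ → ℚ)
    (ha : IsExpSeq (1 + PowerSeries.X + PowerSeries.X ^ 2) a) :
    ∀ k : ℕ, 1 ≤ k →
      a k = if ∃ j : ℕ, k = 2 ^ j then 1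
        else if ∃ j : ℕ, k = 3 * 2 ^ j then -1 else 0 := by
  have hbfun : IsExpSeq (1 + PowerSeries.X + PowerSeries.X ^ 2) bfun := fun n => exists_bfun n
  suffices h : ∀ k, 1 ≤ k → a k = bfun k by
    intro k hk
    have := h k hk
    rw [this]
    simp only [bfun]
  intro k
  induction k using Nat.strong_induction_on with
  | _ k ih =>
    intro hk
    obtain ⟨m, rfl⟩ : ∃ m, k = m + 1 := ⟨k - 1, by omega⟩
    have hprod : (∏ j ∈ Finset.Icc 1 m, binomPow (a j) j) =
        ∏ j ∈ Finset.Icc 1 m, binomPow (bfun j) j := by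
      apply Finset.prod_congr rfl
      intro j hj
      rw [Finset.mem_Icc] at hj
      rw [ih j (by omega) hj.1]
    have h1 := ha (m + 1)
    have h2 := hbfun (m + 1)
    rw [Finset.prod_Icc_succ_top (by omega), coeff_mul_binomPow _ _ _ (by omega)] at h1 h2
    rw [hprod] at h1
    have hc0 : PowerSeries.constantCoeff (∏ j ∈ Finset.Icc 1 m, binomPow (bfun j) j) = 1 := by
      rw [map_prod]
      apply Finset.prod_eq_one
      intro j hj
      simp [binomPow, PowerSeries.constantCoeff_mk, Ring.choose_zero_right]
    rw [hc0, mul_one] at h1 h2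
    linarith
end
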